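/- There are no positive integers (v,b,r,k,λ) with 2 < k < v−1, v = 15, satisfying simultaneously: 2 ≤ y ≤ 10, v < (k²−k)/(y−1), r(k−1) = λ(v−1), (y−1)(r−1) = (k−1)(λ−1), y | k, y | (r−λ), and b = vr/k an integer with r > k > λ > 1. -/
import Mathlib

/-- There are no feasible quasi-symmetric design parameters with v = 15. -/
theorem stmt10 :
    ¬ ∃ b r k lam y : ℕ,
      2 < k ∧ k < 15 - 1 ∧ 2 ≤ y ∧ y ≤ 10 ∧
      (15 : ℚ) < ((k : ℚ) ^ 2 - k) / ((y : ℚ) - 1) ∧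
      r * (k - 1) = lam * (15 - 1) ∧
      (y - 1) * (r - 1) = (k - 1) * (lam - 1) ∧
      y ∣ k ∧ y ∣ (r - lam) ∧
      b * k = 15 * r ∧
      lam < k ∧ k < r ∧ 1 < lam := by
  rintro ⟨b, r, k, lam, y, hk3, hk14, hy2, hy10, hrat, h1, h2, hyk, hyrl, hb, hlk, hkr, hlam⟩
  clear hrat
  have hr : r ≤ 14 := by
    have h : r * (k - 1) ≤ 14 * (k - 1) := by
      rw [h1]
      have : lam ≤ k - 1 := by omega
      calc lam * (15 - 1) = lam * 14 := by norm_num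
        _ ≤ (k - 1) * 14 := Nat.mul_le_mul_right _ this
        _ = 14 * (k - 1) := Nat.mul_comm _ _
    exact Nat.le_of_mul_le_mul_right (by omega : r * (k-1) ≤ 14 * (k-1)) (by omega)
  interval_cases k <;> interval_cases y <;> omega
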